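/- For all positive integers s and k, there is a bijection between the set of free ballot (s,k)-paths of height 0 and the set of ballot (s,k)-paths of even height. -/

import Mathlib

open Relation

/-- The set L(s,k) = ⋃_j {2i−1+2sj : jk+1 ≤ i ≤ ⌊s/2⌋}. -/
def Lset (s k : ℕ) : Set ℕ :=
  {x | ∃ j i : ℕ, j * k + 1 ≤ i ∧ i ≤ s / 2 ∧ x = 2 * i - 1 + 2 * s * j}

/-- The set R(s,k) = ⋃_j {2i−1+2sj : jk+⌈(s+k)/2⌉+1 ≤ i ≤ s}. -/
def Rset (s k : ℕ) : Set ℕ :=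
  {x | ∃ j i : ℕ, j * k + (s + k + 1) / 2 + 1 ≤ i ∧ i ≤ s ∧ x = 2 * i - 1 + 2 * s * j}

def Pset (s k : ℕ) : Set ℕ := Lset s k ∪ Rset s k

/-- Cover relation of P(s,k): y covers x iff y = x + 2s + 2t, 0 ≤ t ≤ k. -/
def Pcov (s k : ℕ) (x y : ℕ) : Prop :=
  x ∈ Pset s k ∧ y ∈ Pset s k ∧ ∃ t ≤ k, y = x + 2 * s + 2 * t

/-- Order of P(s,k): reflexive-transitive closure of the cover relation. -/
def Ple (s k : ℕ) : ℕ → ℕ → Prop := ReflTransGen (Pcov s k)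

def L'set (s k : ℕ) : Set (ℚ × ℤ) :=
  {p | ∃ j i : ℕ, j * k + 1 ≤ i ∧ i ≤ s / 2 ∧
    p = ((i : ℚ) - (k : ℚ) / 2 * (j : ℚ), (j : ℤ))}

def R'set (s k : ℕ) : Set (ℚ × ℤ) :=
  {p | ∃ j i : ℕ, j * k + (s + k + 1) / 2 + 1 ≤ i ∧ i ≤ s ∧
    p = ((s : ℚ) + 1 - (i : ℚ) + (k : ℚ) / 2 * ((j : ℚ) + 1), -(j : ℤ) - 1)}

def P'set (s k : ℕ) : Set (ℚ × ℤ) := L'set s k ∪ R'set s k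

/-- Cover relation of P'(s,k): q covers p. -/
def P'cov (s k : ℕ) (p q : ℚ × ℤ) : Prop :=
  (p ∈ L'set s k ∧ q ∈ L'set s k ∧ |q.1 - p.1| ≤ (k : ℚ) / 2 ∧ q.2 = p.2 + 1) ∨
  (p ∈ R'set s k ∧ q ∈ R'set s k ∧ |q.1 - p.1| ≤ (k : ℚ) / 2 ∧ q.2 = p.2 - 1)

def P'le (s k : ℕ) : ℚ × ℤ → ℚ × ℤ → Prop := ReflTransGen (P'cov s k)

/-- Order ideals of P'(s,k). -/
def IsIdealP' (s k : ℕ) (I : Set (ℚ × ℤ)) : Prop :=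
  I ⊆ P'set s k ∧ ∀ q ∈ I, ∀ p, P'le s k p q → p ∈ I

/-- No two elements (a,0), (a',−1) with |a−a'| ≤ k/2. -/
def NoClosePair (k : ℕ) (I : Set (ℚ × ℤ)) : Prop :=
  ¬ ∃ a a' : ℚ, (a, (0 : ℤ)) ∈ I ∧ (a', (-1 : ℤ)) ∈ I ∧ |a - a'| ≤ (k : ℚ) / 2

def Jset (s k : ℕ) : Set (Set (ℚ × ℤ)) :=
  {I | IsIdealP' s k I ∧ NoClosePair k I}

/-- The conjugate partition: number of parts of f exceeding j. -/
noncomputable def conj (f : ℕ → ℕ) (j : ℕ) : ℕ := Set.ncard {i | j < f i}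

/-- A partition, as a weakly decreasing function ℕ → ℕ that is eventually 0. -/
def IsPartitionFun (f : ℕ → ℕ) : Prop := Antitone f ∧ ∃ N, f N = 0

def SelfConj (f : ℕ → ℕ) : Prop := ∀ j, f j = conj f j

/-- Hook length of the cell in row i, column j (0-indexed, valid when j < f i). -/
noncomputable def hook (f : ℕ → ℕ) (i j : ℕ) : ℕ := (f i - j) + (conj f j - i) - 1

/-- f is a t-core: no hook length is divisible by t. -/
def IsTCore (t : ℕ) (f : ℕ → ℕ) : Prop := ∀ i j, j < f i → ¬ (t ∣ hook f i j)

/-- The set of main-diagonal hook lengths of f. -/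
def MD (f : ℕ → ℕ) : Set ℕ := {h | ∃ i, i < f i ∧ h = hook f i i}

/-- Steps of a ballot (s,k)-path, recorded as (width in half-units, height change):
up = (k/2,1), down = (k/2,−1), horizontal = (ℓ,0) for 1 ≤ ℓ < k. -/
def ValidStep (k : ℕ) (p : ℕ × ℤ) : Prop :=
  (p.1 = k ∧ (p.2 = 1 ∨ p.2 = -1)) ∨
  (p.2 = 0 ∧ ∃ l : ℕ, 1 ≤ l ∧ l < k ∧ p.1 = 2 * l)

/-- Free ballot (s,k)-path, with total width w in half-units (w = 2s) and height n. -/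
def IsFreeBallot (k w : ℕ) (n : ℤ) (P : List (ℕ × ℤ)) : Prop :=
  (∀ p ∈ P, ValidStep k p) ∧ (P.map Prod.fst).sum = w ∧ (P.map Prod.snd).sum = n

/-- Ballot (s,k)-path: a free ballot path that never goes below the x-axis. -/
def IsBallot (k w : ℕ) (n : ℤ) (P : List (ℕ × ℤ)) : Prop :=
  IsFreeBallot k w n P ∧ ∀ Q, Q <+: P → 0 ≤ (Q.map Prod.snd).sum

/-- A path is symmetric if it equals its reverse complement. -/
def SymPath (P : List (ℕ × ℤ)) : Prop :=
  P = P.reverse.map (fun p => (p.1, -p.2))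

/-- The path starts with a horizontal or a down step. -/
def StartsHD (P : List (ℕ × ℤ)) : Prop :=
  ∃ p rest, P = p :: rest ∧ p.2 ≠ 1


namespace S10

def c (p : ℕ × ℤ) : ℕ × ℤ := (p.1, -p.2)
def nr (P : List (ℕ × ℤ)) : List (ℕ × ℤ) := P.reverse.map c
def ps (P : List (ℕ × ℤ)) (t : ℕ) : ℤ := ((P.take t).map Prod.snd).sum
lemma sum_neg_snd (P : List (ℕ × ℤ)) :
    (P.map (fun x : ℕ × ℤ => -x.2)).sum = -(P.map Prod.snd).sum := by
  induction P with
  | nil => simp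
  | cons a t ih => simp [ih]; ring

@[simp] lemma length_nr (P : List (ℕ × ℤ)) : (nr P).length = P.length := by simp [nr]
@[simp] lemma nr_nr (P : List (ℕ × ℤ)) : nr (nr P) = P := by
  simp [nr, c, List.map_reverse, List.map_map, Function.comp_def]
@[simp] lemma ps_zero (P : List (ℕ × ℤ)) : ps P 0 = 0 := rfl
lemma sum_fst_nr (P : List (ℕ × ℤ)) : ((nr P).map Prod.fst).sum = (P.map Prod.fst).sum := by
  simp [nr, c, List.map_map, Function.comp_def, List.sum_reverse]
lemma sum_snd_nr (P : List (ℕ × ℤ)) : ((nr P).map Prod.snd).sum = -(P.map Prod.snd).sum := by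
  simp only [nr, c, List.map_map, Function.comp_def]
  rw [sum_neg_snd P.reverse, List.map_reverse, List.sum_reverse]

lemma ps_length (P : List (ℕ × ℤ)) : ps P P.length = (P.map Prod.snd).sum := by simp [ps]
lemma ps_of_ge (P : List (ℕ × ℤ)) {t : ℕ} (h : P.length ≤ t) :
    ps P t = (P.map Prod.snd).sum := by simp [ps, List.take_of_length_le h]
lemma ps_take (P : List (ℕ × ℤ)) {i u : ℕ} (h : u ≤ i) : ps (P.take i) u = ps P u := by
  simp [ps, List.take_take, Nat.min_eq_left h]
lemma ps_append_left (A B : List (ℕ × ℤ)) {t : ℕ} (h : t ≤ A.length) :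
    ps (A ++ B) t = ps A t := by
  simp [ps, List.take_append_of_le_length h]
lemma ps_append_right (A B : List (ℕ × ℤ)) (u : ℕ) :
    ps (A ++ B) (A.length + u) = ps A A.length + ps B u := by
  simp [ps, List.take_append]
  rw [List.take_of_length_le (by simp)]
lemma sum_snd_drop (P : List (ℕ × ℤ)) (i : ℕ) :
    ((P.drop i).map Prod.snd).sum = (P.map Prod.snd).sum - ps P i := by
  have h := List.sum_take_add_sum_drop (P.map Prod.snd) i
  simp only [ps, List.map_take, List.map_drop]
  linarith
lemma ps_nr (P : List (ℕ × ℤ)) {t : ℕ} :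
    ps (nr P) t = ps P (P.length - t) - ps P P.length := by
  have h1 : (nr P).take t = ((P.drop (P.length - t)).reverse).map c := by
    rw [nr, ← List.map_take, List.take_reverse]
  rw [ps, h1, List.map_map, List.map_reverse, List.sum_reverse,
    show (Prod.snd ∘ c) = (fun x : ℕ × ℤ => -x.2) from rfl, sum_neg_snd, sum_snd_drop, ps_length]
  ring
lemma ps_drop (P : List (ℕ × ℤ)) (i u : ℕ) (h : i ≤ P.length) :
    ps (P.drop i) u = ps P (i + u) - ps P i := by
  have h2 := ps_append_right (P.take i) (P.drop i) u
  rw [List.take_append_drop, List.length_take, Nat.min_eq_left h] at h2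
  have h3 : ps (P.take i) i = ps P i := ps_take P le_rfl
  rw [h2, h3]
  ring

def lastMin (P : List (ℕ × ℤ)) : ℕ :=
  Nat.findGreatest (fun t => ∀ u ≤ P.length, ps P t ≤ ps P u) P.length

def lastHalf (P : List (ℕ × ℤ)) : ℕ :=
  Nat.findGreatest (fun t => 2 * ps P t = (P.map Prod.snd).sum) P.length

lemma lastMin_le (P : List (ℕ × ℤ)) : lastMin P ≤ P.length := Nat.findGreatest_le _
lemma lastHalf_le (P : List (ℕ × ℤ)) : lastHalf P ≤ P.length := Nat.findGreatest_le _

lemma lastMin_spec (P : List (ℕ × ℤ)) : ∀ u ≤ P.length, ps P (lastMin P) ≤ ps P u := by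
  obtain ⟨i, hi, hmin⟩ := Finset.exists_min_image (Finset.range (P.length + 1)) (ps P)
    ⟨0, Finset.mem_range.2 (Nat.succ_pos _)⟩
  have hi' : i ≤ P.length := by simpa [Nat.lt_succ_iff] using hi
  exact Nat.findGreatest_spec (P := fun t => ∀ u ≤ P.length, ps P t ≤ ps P u) hi' (fun u hu => hmin u (Finset.mem_range.2 (Nat.lt_succ_of_le hu)))

lemma lastMin_lt (P : List (ℕ × ℤ)) {t : ℕ} (h1 : lastMin P < t) (h2 : t ≤ P.length) :
    ps P (lastMin P) < ps P t := by
  have := Nat.findGreatest_is_greatest h1 h2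
  push_neg at this
  obtain ⟨u, hu, hlt⟩ := this
  exact lt_of_le_of_lt (lastMin_spec P u hu) hlt

lemma ps_step_le {P : List (ℕ × ℤ)} (hv : ∀ p ∈ P, p.2 ≤ 1) (t : ℕ) :
    ps P (t + 1) ≤ ps P t + 1 := by
  rcases lt_or_ge t P.length with h | h
  · rw [ps, List.take_succ]
    have h2 : P[t]? = some P[t] := List.getElem?_eq_getElem h
    rw [h2]
    simp only [List.map_append, List.sum_append, Option.toList_some, List.map_cons,
      List.map_nil, List.sum_cons, List.sum_nil]
    have := hv P[t] (List.getElem_mem h)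
    have h3 : ((P.take t).map Prod.snd).sum = ps P t := rfl
    omega
  · rw [ps_of_ge P h, ps_of_ge P (by omega : P.length ≤ t + 1)]
    omega

lemma ivt {P : List (ℕ × ℤ)} (hv : ∀ p ∈ P, p.2 ≤ 1) (m : ℤ) :
    ∀ b a : ℕ, a ≤ b → ps P a ≤ m → m ≤ ps P b → ∃ t, a ≤ t ∧ t ≤ b ∧ ps P t = m := by
  intro b
  induction b with
  | zero =>
    intro a ha h2 h3
    have ha0 : a = 0 := Nat.le_zero.mp ha
    subst ha0
    exact ⟨0, le_rfl, le_rfl, le_antisymm h2 h3⟩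
  | succ b ih =>
    intro a ha h2 h3
    by_cases hb : ps P (b + 1) = m
    · exact ⟨b + 1, ha, le_rfl, hb⟩
    · have hlt : m < ps P (b + 1) := lt_of_le_of_ne h3 (Ne.symm hb)
      have hb2 : m ≤ ps P b := by have := ps_step_le hv b; omega
      have ha2 : a ≤ b := by
        by_contra hc
        have : a = b + 1 := by omega
        subst this; omega
      obtain ⟨t, h4, h5, h6⟩ := ih a ha2 h2 hb2
      exact ⟨t, h4, by omega, h6⟩

def spl (P : List (ℕ × ℤ)) (i : ℕ) : List (ℕ × ℤ) := nr (P.take i) ++ P.drop i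

variable {P : List (ℕ × ℤ)} {i : ℕ}

lemma length_take_eq (h : i ≤ P.length) : (P.take i).length = i := by
  simp [List.length_take, Nat.min_eq_left h]

lemma length_spl (h : i ≤ P.length) : (spl P i).length = P.length := by
  simp [spl, List.length_take]; omega

lemma spl_fst (h : i ≤ P.length) :
    ((spl P i).map Prod.fst).sum = (P.map Prod.fst).sum := by
  conv_rhs => rw [← List.take_append_drop i P]
  simp [spl, sum_fst_nr, List.map_append, List.sum_append]

lemma ps_take_eq (h : i ≤ P.length) : ps (P.take i) (P.take i).length = ps P i := by
  rw [length_take_eq h]; exact ps_take P le_rfl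

lemma ps_spl_le (h : i ≤ P.length) {t : ℕ} (ht : t ≤ i) :
    ps (spl P i) t = ps P (i - t) - ps P i := by
  rw [spl, ps_append_left _ _ (by rw [length_nr, length_take_eq h]; exact ht), ps_nr,
    length_take_eq h, ps_take P (Nat.sub_le _ _), ps_take P le_rfl]

lemma ps_spl_ge (h : i ≤ P.length) (u : ℕ) :
    ps (spl P i) (i + u) = ps P (i + u) - 2 * ps P i := by
  have hl : (nr (P.take i)).length = i := by rw [length_nr, length_take_eq h]
  have h2 := ps_append_right (nr (P.take i)) (P.drop i) u
  rw [hl] at h2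
  rw [spl, h2, ps_nr, length_take_eq h, Nat.sub_self, ps_zero, ps_take P le_rfl,
    ps_drop P i u h]
  ring

lemma spl_spl (h : i ≤ P.length) : spl (spl P i) i = P := by
  have h1 : (spl P i).take i = nr (P.take i) :=
    List.take_left' (by rw [length_nr, length_take_eq h])
  have h2 : (spl P i).drop i = P.drop i :=
    List.drop_left' (by rw [length_nr, length_take_eq h])
  rw [spl, h1, h2, nr_nr, List.take_append_drop]

lemma ValidStep_c {k : ℕ} {p : ℕ × ℤ} (h : ValidStep k p) : ValidStep k (c p) := by
  rcases h with ⟨h1, h2 | h2⟩ | ⟨h1, l, hl1, hl2, hl3⟩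
  · exact Or.inl ⟨h1, Or.inr (by simp [c, h2])⟩
  · exact Or.inl ⟨h1, Or.inl (by simp [c, h2])⟩
  · exact Or.inr ⟨by simp [c, h1], l, hl1, hl2, hl3⟩

lemma spl_valid {k : ℕ} (hv : ∀ p ∈ P, ValidStep k p) : ∀ p ∈ spl P i, ValidStep k p := by
  intro p hp
  rcases List.mem_append.1 hp with hp | hp
  · rw [nr] at hp
    obtain ⟨q, hq, rfl⟩ := List.mem_map.1 hp
    exact ValidStep_c (hv q (List.mem_of_mem_take (List.mem_reverse.1 hq)))
  · exact hv p (List.mem_of_mem_drop hp)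

lemma valid_snd_le_one {k : ℕ} {p : ℕ × ℤ} (h : ValidStep k p) : p.2 ≤ 1 := by
  rcases h with ⟨_, h2 | h2⟩ | ⟨h1, _⟩ <;> omega


lemma ballot_ps {P : List (ℕ × ℤ)} (h : ∀ Q, Q <+: P → 0 ≤ (Q.map Prod.snd).sum) :
    ∀ t, 0 ≤ ps P t := fun t => h _ (List.take_prefix t P)

lemma ps_ballot {P : List (ℕ × ℤ)} (h : ∀ t, 0 ≤ ps P t) :
    ∀ Q, Q <+: P → 0 ≤ (Q.map Prod.snd).sum := by
  intro Q hQ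
  rw [List.prefix_iff_eq_take.1 hQ]
  exact h Q.length

lemma F_mem {k w : ℕ} {P : List (ℕ × ℤ)} (hf : IsFreeBallot k w 0 P) :
    ∃ n' : ℕ, IsBallot k w (2 * n') (spl P (lastMin P)) := by
  obtain ⟨hv, hw, hh⟩ := hf
  set i := lastMin P with hidef
  have hi : i ≤ P.length := lastMin_le P
  have hmin : ∀ u ≤ P.length, ps P i ≤ ps P u := lastMin_spec P
  have hps0 : ps P i ≤ 0 := by
    have := hmin 0 (Nat.zero_le _); simpa using this
  have hlen := length_spl (P := P) (i := i) hi
  have h2 : ps (spl P i) P.length = ps P P.length - 2 * ps P i := by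
    have := ps_spl_ge hi (P.length - i)
    rwa [Nat.add_sub_cancel' hi] at this
  refine ⟨(-ps P i).toNat, ⟨⟨spl_valid hv, ?_, ?_⟩, ?_⟩⟩
  · rw [spl_fst hi, hw]
  · rw [← ps_length, hlen, h2, ps_length, hh, Int.toNat_of_nonneg (by omega)]
    ring
  · apply ps_ballot
    intro t
    rcases le_or_gt t i with ht | ht
    · rw [ps_spl_le hi ht]
      have := hmin (i - t) (by omega); omega
    · rcases le_or_gt t P.length with ht2 | ht2
      · obtain ⟨u, rfl⟩ : ∃ u, t = i + u := ⟨t - i, by omega⟩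
        rw [ps_spl_ge hi u]
        have := hmin (i + u) ht2; omega
      · rw [ps_of_ge _ (by rw [hlen]; omega), ← ps_length, hlen, h2, ps_length, hh]
        omega

lemma lastHalf_spec {k w : ℕ} {n' : ℕ} {P : List (ℕ × ℤ)} (hb : IsBallot k w (2 * n') P) :
    ps P (lastHalf P) = n' := by
  obtain ⟨⟨hv, hw, hh⟩, hpre⟩ := hb
  have hv1 : ∀ p ∈ P, p.2 ≤ 1 := fun p hp => valid_snd_le_one (hv p hp)
  obtain ⟨t, _, ht2, ht3⟩ := ivt hv1 (n' : ℤ) P.length 0 (Nat.zero_le _) (by simp)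
    (by rw [ps_length, hh]; omega)
  have hpred : 2 * ps P t = (P.map Prod.snd).sum := by rw [ht3, hh]
  have h3 : 2 * ps P (lastHalf P) = (P.map Prod.snd).sum := Nat.findGreatest_spec
    (P := fun t => 2 * ps P t = (P.map Prod.snd).sum) ht2 hpred
  rw [hh] at h3
  omega

lemma G_mem {k w : ℕ} {n' : ℕ} {P : List (ℕ × ℤ)} (hb : IsBallot k w (2 * n') P) :
    IsFreeBallot k w 0 (spl P (lastHalf P)) := by
  have hpsj := lastHalf_spec hb
  obtain ⟨⟨hv, hw, hh⟩, hpre⟩ := hb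
  set j := lastHalf P with hjdef
  have hj : j ≤ P.length := lastHalf_le P
  have h2 : ps (spl P j) P.length = ps P P.length - 2 * ps P j := by
    have := ps_spl_ge hj (P.length - j)
    rwa [Nat.add_sub_cancel' hj] at this
  refine ⟨spl_valid hv, by rw [spl_fst hj, hw], ?_⟩
  rw [← ps_length, length_spl hj, h2, ps_length, hh, hpsj]
  ring

lemma GF {k w : ℕ} {P : List (ℕ × ℤ)} (hf : IsFreeBallot k w 0 P) :
    spl (spl P (lastMin P)) (lastHalf (spl P (lastMin P))) = P := by
  obtain ⟨hv, hw, hh⟩ := hf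
  set i := lastMin P with hidef
  have hi : i ≤ P.length := lastMin_le P
  set S := spl P i with hSdef
  have hlen : S.length = P.length := length_spl hi
  have hsum : (S.map Prod.snd).sum = -2 * ps P i := by
    rw [← ps_length, hlen]
    have := ps_spl_ge hi (P.length - i)
    rw [Nat.add_sub_cancel' hi] at this
    rw [hSdef] at *
    rw [this, ps_length, hh]; ring
  have hpredi : 2 * ps S i = (S.map Prod.snd).sum := by
    rw [hsum, hSdef, ps_spl_le hi le_rfl, Nat.sub_self, ps_zero]; ring
  have hkey : lastHalf S = i := by
    apply le_antisymm
    · by_contra hgt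
      push_neg at hgt
      have hle : lastHalf S ≤ S.length := lastHalf_le S
      have hp := Nat.findGreatest_spec
        (P := fun t => 2 * ps S t = (S.map Prod.snd).sum)
        (show i ≤ S.length by omega) hpredi
      have hp' : 2 * ps S (lastHalf S) = (S.map Prod.snd).sum := hp
      obtain ⟨u, hu⟩ : ∃ u, lastHalf S = i + u := ⟨lastHalf S - i, by omega⟩
      have hval : ps S (i + u) = ps P (i + u) - 2 * ps P i := ps_spl_ge hi u
      have hstrict : ps P i < ps P (i + u) := lastMin_lt P (by omega) (by omega)
      rw [hu, hval, hsum] at hp'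
      omega
    · exact Nat.le_findGreatest (by omega) hpredi
  rw [hkey, hSdef, spl_spl hi]

lemma FG {k w : ℕ} {n' : ℕ} {P : List (ℕ × ℤ)} (hb : IsBallot k w (2 * n') P) :
    spl (spl P (lastHalf P)) (lastMin (spl P (lastHalf P))) = P := by
  have hpsj := lastHalf_spec hb
  obtain ⟨⟨hv, hw, hh⟩, hpre⟩ := hb
  set j := lastHalf P with hjdef
  have hj : j ≤ P.length := lastHalf_le P
  have hnn : ∀ t, 0 ≤ ps P t := ballot_ps hpre
  have hv1 : ∀ p ∈ P, p.2 ≤ 1 := fun p hp => valid_snd_le_one (hv p hp)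
  have hgt : ∀ t, j < t → t ≤ P.length → (n' : ℤ) < ps P t := by
    intro t h1 h2
    have hne : ps P t ≠ (n' : ℤ) := by
      intro he
      have hng := Nat.findGreatest_is_greatest
        (P := fun t => 2 * ps P t = (P.map Prod.snd).sum) h1 h2
      exact hng (show 2 * ps P t = (P.map Prod.snd).sum by rw [he, hh])
    rcases lt_or_gt_of_ne hne with hlt | hgt'
    · obtain ⟨u, hu1, hu2, hu3⟩ := ivt hv1 (n' : ℤ) P.length t h2 (le_of_lt hlt)
        (by rw [ps_length, hh]; omega)
      have hng := Nat.findGreatest_is_greatest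
        (P := fun t => 2 * ps P t = (P.map Prod.snd).sum) (by omega : j < u) hu2
      exact absurd (show 2 * ps P u = (P.map Prod.snd).sum by rw [hu3, hh]) hng
    · exact hgt'
  set S := spl P j with hSdef
  have hlen : S.length = P.length := length_spl hj
  have hSj : ps S j = -(n' : ℤ) := by
    rw [hSdef, ps_spl_le hj le_rfl, Nat.sub_self, ps_zero, hpsj]; ring
  have hpredj : ∀ u ≤ S.length, ps S j ≤ ps S u := by
    intro u hu
    rw [hlen] at hu
    rcases le_or_gt u j with h1 | h1
    · rw [hSj, hSdef, ps_spl_le hj h1, hpsj]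
      have := hnn (j - u); omega
    · obtain ⟨v, rfl⟩ : ∃ v, u = j + v := ⟨u - j, by omega⟩
      rw [hSj, hSdef, ps_spl_ge hj v, hpsj]
      have := hgt (j + v) h1 hu; omega
  have hkey : lastMin S = j := by
    apply le_antisymm
    · by_contra hgt2
      push_neg at hgt2
      have hle : lastMin S ≤ S.length := lastMin_le S
      have hp := Nat.findGreatest_spec
        (P := fun t => ∀ u ≤ S.length, ps S t ≤ ps S u)
        (show j ≤ S.length by omega) hpredj
      have h5 : ps S (lastMin S) ≤ ps S j := hp j (by omega)
      obtain ⟨u, hu⟩ : ∃ u, lastMin S = j + u := ⟨lastMin S - j, by omega⟩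
      have hval : ps S (j + u) = ps P (j + u) - 2 * ps P j := ps_spl_ge hj u
      have := hgt (j + u) (by omega) (by omega)
      rw [hu, hval, hpsj] at h5
      rw [hSj] at h5
      omega
    · exact Nat.le_findGreatest (by omega) hpredj
  rw [hkey, hSdef, spl_spl hj]

end S10

theorem stmt10 (s k : ℕ) (hs : 0 < s) (hk : 0 < k) :
    Nonempty ({P : List (ℕ × ℤ) // IsFreeBallot k (2 * s) 0 P} ≃
      {P : List (ℕ × ℤ) // ∃ n : ℕ, IsBallot k (2 * s) (2 * n) P}) := by
  exact ⟨{
    toFun := fun x => ⟨S10.spl x.1 (S10.lastMin x.1), S10.F_mem x.2⟩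
    invFun := fun x => ⟨S10.spl x.1 (S10.lastHalf x.1), by
      obtain ⟨n', hb⟩ := x.2; exact S10.G_mem hb⟩
    left_inv := fun x => Subtype.ext (S10.GF x.2)
    right_inv := fun x => Subtype.ext (by
      obtain ⟨n', hb⟩ := x.2; exact S10.FG hb) }⟩
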